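/- Let a ∈ ℂ with a ≠ 1, and define the Möbius maps φ_a(u) = (au + 1)/(u + 1) and J_a(u) = ((a+1)u − 2a)/(2u − (a+1)). Then: (i) J_a(1) = 1, J_a(a) = a, and J_a(J_a(u)) = u for every u where both evaluations are defined, so J_a is an involution fixing 1 and a; (ii) for every w ∈ ℂ with w ≠ 1 and w ≠ −1, J_a(φ_a(w)) = (aw − 1)/(w − 1); (iii) consequently, for all z, w ∈ ℂ with z ≠ −1, w ≠ 1 and w ≠ −1, the relation ((aw−1)/(w−1))² + ((aw−1)/(w−1))·((az+1)/(z+1)) + ((az+1)/(z+1))² = 3 holds if and only if Y² + Y·X + X² = 3, where Y = φ_a(z) and X = J_a(φ_a(w)). -/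

import Mathlib

noncomputable section

/-- The Möbius change of coordinates `φ_a(u) = (au + 1)/(u + 1)`. -/
def phiMap (a u : ℂ) : ℂ := (a * u + 1) / (u + 1)

/-- The Möbius involution `J_a(u) = ((a+1)u − 2a)/(2u − (a+1))` fixing `1` and `a`. -/
def Jmap (a u : ℂ) : ℂ := ((a + 1) * u - 2 * a) / (2 * u - (a + 1))

lemma Jphi (a : ℂ) (ha : a ≠ 1) (w : ℂ) (hw1 : w ≠ 1) (hw2 : w ≠ -1) :
    Jmap a (phiMap a w) = (a * w - 1) / (w - 1) := by
  have h1 : w + 1 ≠ 0 := by intro h; apply hw2; linear_combination h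
  have h2 : w - 1 ≠ 0 := sub_ne_zero.mpr hw1
  have ha' : a - 1 ≠ 0 := sub_ne_zero.mpr ha
  have hd : 2 * phiMap a w - (a + 1) = (a - 1) * (w - 1) / (w + 1) := by
    unfold phiMap; field_simp; ring
  unfold Jmap
  rw [hd]
  have hd' : (a - 1) * (w - 1) / (w + 1) ≠ 0 := by
    apply div_ne_zero (mul_ne_zero ha' h2) h1
  unfold phiMap
  field_simp
  ring

/-- The coordinate change `φ_a` conjugates the correspondence `F_a` to
`J_a ∘ Cov₀^Q` where `Q(u) = u³`:
(i) `J_a` is an involution fixing `1` and `a`;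
(ii) `J_a(φ_a(w)) = (aw − 1)/(w − 1)` for `w ≠ ±1`;
(iii) the defining relation of `F_a` holds at `(z, w)` iff `Y² + YX + X² = 3`
for `Y = φ_a(z)` and `X = J_a(φ_a(w))`. -/
theorem correspondence_change_of_coordinates (a : ℂ) (ha : a ≠ 1) :
    (Jmap a 1 = 1 ∧ Jmap a a = a ∧
      ∀ u : ℂ, 2 * u - (a + 1) ≠ 0 → 2 * Jmap a u - (a + 1) ≠ 0 →
        Jmap a (Jmap a u) = u) ∧
    (∀ w : ℂ, w ≠ 1 → w ≠ -1 → Jmap a (phiMap a w) = (a * w - 1) / (w - 1)) ∧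
    (∀ z w : ℂ, z ≠ -1 → w ≠ 1 → w ≠ -1 →
      (((a * w - 1) / (w - 1)) ^ 2 +
          ((a * w - 1) / (w - 1)) * ((a * z + 1) / (z + 1)) +
          ((a * z + 1) / (z + 1)) ^ 2 = 3 ↔
        (phiMap a z) ^ 2 + (phiMap a z) * (Jmap a (phiMap a w)) +
          (Jmap a (phiMap a w)) ^ 2 = 3)) := by
  have ha' : a - 1 ≠ 0 := sub_ne_zero.mpr ha
  refine ⟨⟨?_, ?_, ?_⟩, fun w hw1 hw2 => Jphi a ha w hw1 hw2, ?_⟩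
  · unfold Jmap
    rw [show 2 * (1:ℂ) - (a + 1) = -(a - 1) by ring,
        show (a + 1) * 1 - 2 * a = -(a - 1) by ring]
    exact div_self (neg_ne_zero.mpr ha')
  · unfold Jmap
    have h2a : 2 * a - (a + 1) = a - 1 := by ring
    rw [h2a, show (a + 1) * a - 2 * a = a * (a - 1) by ring]
    exact mul_div_cancel_right₀ a ha'
  · intro u hu hJu
    have hJ : Jmap a u = ((a + 1) * u - 2 * a) / (2 * u - (a + 1)) := rfl
    unfold Jmap
    rw [hJ] at hJu
    field_simp at hJu ⊢
    rw [div_eq_iff (div_ne_zero_iff.mp hJu).1]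
    ring
  · intro z w hz hw1 hw2
    rw [Jphi a ha w hw1 hw2]
    unfold phiMap
    constructor <;> intro h <;> linear_combination h
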